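/- Under the blanket assumptions, suppose g* is continuous on dom(g*). For ε > 0 define Q_ε: ℝ^n × ℝ^n → (−∞,+∞] as Q_ε(x,y) := Q(x,y) if η(x,y) ≥ ε and Q_ε(x,y) := +∞ otherwise (i.e. Q_ε is the sum of Q and the indicator function of {(x,y): η(x,y) ≥ ε}). If for every ε > 0 the function Q_ε is a KL function, then Q is a KL function. -/

import Mathlib

open Filter Topology Set
open scoped RealInnerProductSpace Pointwise NNReal

noncomputable section

namespace Paper

variable {E : Type*} [NormedAddCommGroup E] [InnerProductSpace ℝ E]

/-- The effective domain of an extended-real-valued function. -/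
def edom (φ : E → EReal) : Set E := {x | φ x ≠ ⊤}

/-- A function with values in `(-∞, +∞]` is proper if it is not identically `+∞`
and never takes the value `-∞`. -/
def Proper (φ : E → EReal) : Prop := (∃ x, φ x ≠ ⊤) ∧ ∀ x, φ x ≠ ⊥

/-- The Fréchet subdifferential of `φ` at `x`. -/
def frSubdiff (φ : E → EReal) (x : E) : Set E :=
  {y | φ x ≠ ⊤ ∧ 0 ≤ Filter.liminf
      (fun z : E => (φ z - φ x - ((⟪y, z - x⟫ : ℝ) : EReal)) * ((‖z - x‖⁻¹ : ℝ) : EReal))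
      (𝓝[≠] x)}

/-- The limiting (Mordukhovich) subdifferential of `φ` at `x`. -/
def limSubdiff (φ : E → EReal) (x : E) : Set E :=
  {y | ∃ u v : ℕ → E,
      Tendsto u atTop (𝓝 x) ∧ Tendsto (fun k => φ (u k)) atTop (𝓝 (φ x)) ∧
      (∀ k, v k ∈ frSubdiff φ (u k)) ∧ Tendsto v atTop (𝓝 y)}

/-- The convex subdifferential of a real-valued function. -/
def cvxSubdiff (g : E → ℝ) (x : E) : Set E :=
  {y | ∀ z, g x + ⟪y, z - x⟫ ≤ g z}

/-- The convex subdifferential of an extended-real-valued function. -/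
def cvxSubdiffE (φ : E → EReal) (x : E) : Set E :=
  {y | ∀ z, φ x + ((⟪y, z - x⟫ : ℝ) : EReal) ≤ φ z}

/-- The Fenchel conjugate of an extended-real-valued function. -/
def fconjE (φ : E → EReal) : E → EReal :=
  fun y => ⨆ x : E, (((⟪x, y⟫ : ℝ) : EReal) - φ x)

/-- The Fenchel conjugate of a real-valued function. -/
def fconj (g : E → ℝ) : E → EReal := fconjE (fun x => ((g x : ℝ) : EReal))

/-- `φ` satisfies the calmness condition at `x` relative to `A`. -/
def CalmAt (φ : E → EReal) (x : E) (A : Set E) : Prop :=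
  ∃ κ : ℝ, 0 < κ ∧ ∃ B ∈ 𝓝 x, ∀ u ∈ B ∩ A,
    φ u ≤ φ x + ((κ * ‖u - x‖ : ℝ) : EReal) ∧ φ x ≤ φ u + ((κ * ‖u - x‖ : ℝ) : EReal)

/-- `φ` satisfies the calmness condition on `A`. -/
def CalmOn (φ : E → EReal) (A : Set E) : Prop := ∀ x ∈ A, CalmAt φ x A

/-- The Kurdyka–Łojasiewicz property of `φ` at `x`. -/
def KLAt (φ : E → EReal) (x : E) : Prop :=
  ∃ ε > (0 : ℝ), ∃ δ > (0 : ℝ), ∃ ϕ ϕ' : ℝ → ℝ,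
    ϕ 0 = 0 ∧ ContinuousOn ϕ (Set.Ico 0 ε) ∧ ConcaveOn ℝ (Set.Ico 0 ε) ϕ ∧
    (∀ s ∈ Set.Ioo (0 : ℝ) ε, HasDerivAt ϕ (ϕ' s) s) ∧
    ContinuousOn ϕ' (Set.Ioo 0 ε) ∧ (∀ s ∈ Set.Ioo (0 : ℝ) ε, 0 < ϕ' s) ∧
    ∀ z ∈ Metric.ball x δ, φ x < φ z → φ z < φ x + (ε : EReal) →
      1 ≤ ENNReal.ofReal (ϕ' ((φ z).toReal - (φ x).toReal)) *
        EMetric.infEdist (0 : E) (limSubdiff φ z)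

/-- The KL property of `φ` at `x` with exponent `θ`. -/
def KLExpAt (φ : E → EReal) (x : E) (θ : ℝ) : Prop :=
  ∃ c > (0 : ℝ), ∃ ε > (0 : ℝ), ∃ δ > (0 : ℝ),
    ∀ z ∈ Metric.ball x δ, φ x < φ z → φ z < φ x + (ε : EReal) →
      ENNReal.ofReal (c * ((φ z).toReal - (φ x).toReal) ^ θ) ≤
        EMetric.infEdist (0 : E) (limSubdiff φ z)

/-- The (possibly multivalued) proximity operator of `φ`. -/
def proxSet (φ : E → EReal) (u : E) : Set E :=
  {z | ∀ w, φ z + ((‖z - u‖ ^ 2 / 2 : ℝ) : EReal) ≤ φ w + ((‖w - u‖ ^ 2 / 2 : ℝ) : EReal)}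

/-- A positive scaling of an extended-real-valued function. -/
def scaleE (α : ℝ) (φ : E → EReal) : E → EReal := fun x => ((α : ℝ) : EReal) * φ x

/-- `h` is locally Lipschitz differentiable on `s`. -/
def LocLipGradOn [CompleteSpace E] (h : E → ℝ) (s : Set E) : Prop :=
  (∀ x ∈ s, DifferentiableAt ℝ h x) ∧
  ∀ x ∈ s, ∃ U ∈ 𝓝 x, ∃ L : ℝ, ∀ u ∈ U ∩ s, ∀ v ∈ U ∩ s,
    ‖gradient h u - gradient h v‖ ≤ L * ‖u - v‖

/-- The numerator `ζ = f + h`. -/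
def zeta (f : E → EReal) (h : E → ℝ) (x : E) : EReal := f x + ((h x : ℝ) : EReal)

/-- `η(x,y) = ⟨x,y⟩ − g^*(y)`. -/
def eta (g : E → ℝ) (x y : E) : EReal := ((⟪x, y⟫ : ℝ) : EReal) - fconj g y

/-- The extended objective of the fractional problem. -/
def Ffun (f : E → EReal) (g h : E → ℝ) (x : E) : EReal :=
  if g x ≠ 0 ∧ f x ≠ ⊤ then ((((f x).toReal + h x) / g x : ℝ) : EReal) else ⊤

/-- The extended objective of the reformulated problem. -/
def Qfun (f : E → EReal) (g h : E → ℝ) (x y : E) : EReal :=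
  if f x ≠ ⊤ ∧ 0 < eta g x y then
    ((((f x).toReal + h x) / (eta g x y).toReal : ℝ) : EReal) else ⊤

/-- Pack a pair into the `ℓ²` product space. -/
def mk2 (x y : E) : WithLp 2 (E × E) := (WithLp.equiv 2 (E × E)).symm (x, y)

def pr1 (p : WithLp 2 (E × E)) : E := (WithLp.equiv 2 (E × E) p).1

def pr2 (p : WithLp 2 (E × E)) : E := (WithLp.equiv 2 (E × E) p).2

/-- `Q` as a function on the `ℓ²` product space. -/
def Qpair (f : E → EReal) (g h : E → ℝ) (p : WithLp 2 (E × E)) : EReal :=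
  Qfun f g h (pr1 p) (pr2 p)

/-- The blanket assumptions of the paper. -/
structure Blanket [CompleteSpace E] (f : E → EReal) (g h : E → ℝ) : Prop where
  f_proper : Proper f
  f_lsc : LowerSemicontinuous f
  f_cont : ContinuousOn f (edom f)
  f_bddBelow : ∃ m : ℝ, ∀ x, (m : EReal) ≤ f x
  h_lsc : LowerSemicontinuous h
  h_diff : LocLipGradOn h {x | g x ≠ 0}
  g_convex : ConvexOn ℝ Set.univ g
  g_nonneg : ∀ x, 0 ≤ g x
  omega_nonempty : ∃ x, g x ≠ 0
  zeta_nonneg : ∀ x, f x ≠ ⊤ → 0 ≤ zeta f h x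

/-- `x` is a critical point of `F`: `0 ∈ ∂̂f(x) + ∇h(x) − F(x)·∂g(x)`. -/
def IsCritF [CompleteSpace E] (f : E → EReal) (g h : E → ℝ) (x : E) : Prop :=
  g x ≠ 0 ∧ f x ≠ ⊤ ∧
  ∃ u ∈ frSubdiff f x, ∃ v ∈ cvxSubdiff g x,
    u + gradient h x - (Ffun f g h x).toReal • v = 0

/-- The level set `X = {x : F(x) ≤ F(x⁰)}`. -/
def lvlSet (f : E → EReal) (g h : E → ℝ) (x0 : E) : Set E :=
  {x | Ffun f g h x ≤ Ffun f g h x0}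

/-- The enlargement `X_{α̲}` of the level set. -/
def Xal (f : E → EReal) (g h : E → ℝ) (x0 : E) (αl : ℝ) : Set E :=
  {z | (Metric.infDist z (lvlSet f g h x0)) ^ 2 ≤ sSup (g '' lvlSet f g h x0) / αl}

/-- The compact set `𝒴 = ∪_{z ∈ X_{α̲}} ∂g(z)`. -/
def Yset (f : E → EReal) (g h : E → ℝ) (x0 : E) (αl : ℝ) : Set E :=
  ⋃ z ∈ Xal f g h x0 αl, cvxSubdiff g z

/-- The set `S = {(x,y) ∈ X × 𝒴 : η(x,y) > 0}`. -/
def Sset (f : E → EReal) (g h : E → ℝ) (x0 : E) (αl : ℝ) : Set (E × E) :=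
  {p | p.1 ∈ lvlSet f g h x0 ∧ p.2 ∈ Yset f g h x0 αl ∧ 0 < eta g p.1 p.2}

/-- The set of accumulation points of a sequence. -/
def accSet {X : Type*} [TopologicalSpace X] (pt : ℕ → X) : Set X :=
  {p | ∃ σ : ℕ → ℕ, StrictMono σ ∧ Tendsto (pt ∘ σ) atTop (𝓝 p)}

/-- A polyhedral function: its epigraph is a finite intersection of closed half-spaces. -/
def IsPolyhedralFn (φ : E → EReal) : Prop :=
  ∃ (m : ℕ) (w : Fin m → E) (c b : Fin m → ℝ),
    ∀ (x : E) (a : ℝ), (φ x ≤ (a : EReal) ↔ ∀ i, ⟪w i, x⟫ + c i * a ≤ b i)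


/-- The truncation `Q_ε` of `Q` to the region `η ≥ ε`. -/
def Qeps (f : E → EReal) (g h : E → ℝ) (ε : ℝ) (p : WithLp 2 (E × E)) : EReal :=
  if (ε : EReal) ≤ eta g (pr1 p) (pr2 p) then Qpair f g h p else ⊤

section Aux

variable {F : Type*} [NormedAddCommGroup F] [InnerProductSpace ℝ F]

/-- The Fréchet subdifferential only depends on local values. -/
lemma frSubdiff_congr_of_eqOn {φ ψ : F → EReal} {z : F} {U : Set F} (hU : U ∈ 𝓝 z)
    (hfg : ∀ u ∈ U, φ u = ψ u) : frSubdiff φ z = frSubdiff ψ z := by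
  have hz : φ z = ψ z := hfg z (mem_of_mem_nhds hU)
  have hev : ∀ᶠ u in 𝓝[≠] z, φ u = ψ u :=
    ((eventually_mem_nhds_iff.mpr hU ).mono (fun u hu => hfg u (mem_of_mem_nhds hu))).filter_mono
      nhdsWithin_le_nhds
  ext y
  have hlim : ∀ y : F,
      Filter.liminf (fun w : F => (φ w - ψ z - ((⟪y, w - z⟫ : ℝ) : EReal)) *
        ((‖w - z‖⁻¹ : ℝ) : EReal)) (𝓝[≠] z) =
      Filter.liminf (fun w : F => (ψ w - ψ z - ((⟪y, w - z⟫ : ℝ) : EReal)) *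
        ((‖w - z‖⁻¹ : ℝ) : EReal)) (𝓝[≠] z) := by
    intro y
    refine Filter.liminf_congr (hev.mono fun w hw => ?_)
    rw [hw]
  simp only [frSubdiff, Set.mem_setOf_eq, hz, hlim y]

/-- The limiting subdifferential only depends on local values. -/
lemma limSubdiff_subset_of_eqOn {φ ψ : F → EReal} {U : Set F} (hUo : IsOpen U)
    (hfg : ∀ u ∈ U, φ u = ψ u) {z : F} (hz : z ∈ U) :
    limSubdiff φ z ⊆ limSubdiff ψ z := by
  rintro y ⟨u, v, hu, huφ, hv, hvy⟩
  have hev : ∀ᶠ k in atTop, u k ∈ U := hu (hUo.mem_nhds hz)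
  obtain ⟨N, hN⟩ := hev.exists_forall_of_atTop
  refine ⟨fun k => u (k + N), fun k => v (k + N),
    hu.comp (tendsto_add_atTop_nat N), ?_, ?_, hvy.comp (tendsto_add_atTop_nat N)⟩
  · have heq : (fun k => ψ (u (k + N))) = fun k => φ (u (k + N)) := by
      funext k
      exact (hfg _ (hN _ (Nat.le_add_left N k))).symm
    rw [heq, ← hfg z hz]
    exact huφ.comp (tendsto_add_atTop_nat N)
  · intro k
    rw [← frSubdiff_congr_of_eqOn (hUo.mem_nhds (hN _ (Nat.le_add_left N k))) hfg]
    exact hv (k + N)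

lemma limSubdiff_congr_of_eqOn {φ ψ : F → EReal} {U : Set F} (hUo : IsOpen U)
    (hfg : ∀ u ∈ U, φ u = ψ u) {z : F} (hz : z ∈ U) :
    limSubdiff φ z = limSubdiff ψ z :=
  Set.Subset.antisymm (limSubdiff_subset_of_eqOn hUo hfg hz)
    (limSubdiff_subset_of_eqOn hUo (fun u hu => (hfg u hu).symm) hz)

/-- The KL property only depends on local values. -/
lemma KLAt_of_eqOn {φ ψ : F → EReal} {U : Set F} (hUo : IsOpen U)
    (hfg : ∀ u ∈ U, φ u = ψ u) {p : F} (hp : p ∈ U) (hK : KLAt ψ p) : KLAt φ p := by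
  obtain ⟨ε, hε, δ, hδ, ϕ, ϕ', h0, hc, hcc, hd, hc', hpos, hkl⟩ := hK
  obtain ⟨r, hr, hball⟩ := Metric.isOpen_iff.1 hUo p hp
  refine ⟨ε, hε, min δ r, lt_min hδ hr, ϕ, ϕ', h0, hc, hcc, hd, hc', hpos, ?_⟩
  intro z hz h1 h2
  have hzU : z ∈ U := hball (Metric.ball_subset_ball (min_le_right _ _) hz)
  have hzφ : φ z = ψ z := hfg z hzU
  have hpφ : φ p = ψ p := hfg p hp
  have hsub : limSubdiff φ z = limSubdiff ψ z := limSubdiff_congr_of_eqOn hUo hfg hzU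
  rw [hzφ, hpφ] at h1 h2 ⊢
  rw [hsub]
  exact hkl z (Metric.ball_subset_ball (min_le_left _ _) hz) h1 h2

/-- `fconj` never takes the value `⊥`. -/
lemma fconj_ne_bot (g : F → ℝ) (y : F) : fconj g y ≠ ⊥ := by
  have hle : ((-(g 0) : ℝ) : EReal) ≤ fconj g y := by
    have := le_iSup (fun x : F => (((⟪x, y⟫ : ℝ) : EReal) - ((g x : ℝ) : EReal))) 0
    simpa [fconj, fconjE, inner_zero_left, ← EReal.coe_sub] using this
  exact fun hbot => by simp [hbot] at hle

end Aux

/-- If every truncation `Q_ε` is a KL function, then so is `Q`. -/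
theorem statement18 {n : ℕ} (f : EuclideanSpace ℝ (Fin n) → EReal)
    (g h : EuclideanSpace ℝ (Fin n) → ℝ) (hb : Blanket f g h)
    (hgstar : ContinuousOn (fconj g) (edom (fconj g)))
    (hKLε : ∀ ε : ℝ, 0 < ε →
      ∀ p : WithLp 2 (EuclideanSpace ℝ (Fin n) × EuclideanSpace ℝ (Fin n)),
        (limSubdiff (Qeps f g h ε) p).Nonempty → KLAt (Qeps f g h ε) p) :
    ∀ p : WithLp 2 (EuclideanSpace ℝ (Fin n) × EuclideanSpace ℝ (Fin n)),
      (limSubdiff (Qpair f g h) p).Nonempty → KLAt (Qpair f g h) p := by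
  intro p hne
  by_cases hQ : Qpair f g h p = ⊤
  · refine ⟨1, one_pos, 1, one_pos, id, fun _ => 1, rfl, continuousOn_id,
      concaveOn_id (convex_Ico 0 1), fun s _ => hasDerivAt_id s, continuousOn_const,
      fun s _ => one_pos, ?_⟩
    intro z _ h1 _
    rw [hQ] at h1
    exact absurd h1 not_top_lt
  · have hcond : f (pr1 p) ≠ ⊤ ∧ 0 < eta g (pr1 p) (pr2 p) := by
      by_contra hc
      exact hQ (by simp only [Qpair, Qfun, if_neg hc])
    obtain ⟨hfx, heta⟩ := hcond
    have hnt : fconj g (pr2 p) ≠ ⊤ := by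
      intro htop
      rw [eta, htop, EReal.sub_top] at heta
      exact absurd heta (by simp)
    have hnb := fconj_ne_bot g (pr2 p)
    set c : ℝ := (fconj g (pr2 p)).toReal with hc
    have hfc : fconj g (pr2 p) = (c : EReal) := (EReal.coe_toReal hnt hnb).symm
    set e : ℝ := ⟪pr1 p, pr2 p⟫ - c with he
    have hetae : eta g (pr1 p) (pr2 p) = ((e : ℝ) : EReal) := by
      rw [eta, hfc, ← EReal.coe_sub]
    have he0 : 0 < e := by
      rw [hetae] at heta; exact_mod_cast heta
    -- continuity of the coordinate maps and of the inner product
    have hpr1 : Continuous (pr1 : WithLp 2 (EuclideanSpace ℝ (Fin n) × EuclideanSpace ℝ (Fin n))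
        → EuclideanSpace ℝ (Fin n)) :=
      continuous_fst.comp (WithLp.prod_continuous_ofLp _ _ _)
    have hpr2 : Continuous (pr2 : WithLp 2 (EuclideanSpace ℝ (Fin n) × EuclideanSpace ℝ (Fin n))
        → EuclideanSpace ℝ (Fin n)) :=
      continuous_snd.comp (WithLp.prod_continuous_ofLp _ _ _)
    have hr : Continuous (fun p' : WithLp 2 (EuclideanSpace ℝ (Fin n) × EuclideanSpace ℝ (Fin n))
        => (⟪pr1 p', pr2 p'⟫ : ℝ)) := hpr1.inner hpr2
    set A : Set (WithLp 2 (EuclideanSpace ℝ (Fin n) × EuclideanSpace ℝ (Fin n))) :=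
      {p' | c + 3 * e / 4 < ⟪pr1 p', pr2 p'⟫} with hA
    have hAo : IsOpen A := isOpen_lt continuous_const hr
    have hpA : p ∈ A := by
      show c + 3 * e / 4 < ⟪pr1 p, pr2 p⟫
      have : (⟪pr1 p, pr2 p⟫ : ℝ) = c + e := by rw [he]; ring
      rw [this]; linarith
    -- a neighborhood of `pr2 p` on which `fconj g` is small (within its domain)
    have hyd : pr2 p ∈ edom (fconj g) := hnt
    have hcw : ContinuousWithinAt (fconj g) (edom (fconj g)) (pr2 p) := hgstar (pr2 p) hyd
    have hmem : fconj g (pr2 p) ∈ Set.Iio (((c + e / 8 : ℝ)) : EReal) := by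
      rw [hfc, Set.mem_Iio]
      exact_mod_cast (by linarith : c < c + e / 8)
    obtain ⟨V, hVo, hyV, hVsub⟩ := mem_nhdsWithin.1 (hcw (isOpen_Iio.mem_nhds hmem))
    set U := A ∩ (pr2 ⁻¹' V) with hU
    have hUo : IsOpen U := hAo.inter (hVo.preimage hpr2)
    have hpU : p ∈ U := ⟨hpA, hyV⟩
    have hkey : ∀ p' ∈ U, Qpair f g h p' = Qeps f g h (e / 2) p' := by
      rintro p' ⟨hA', hV'⟩
      by_cases hdom : pr2 p' ∈ edom (fconj g)
      · obtain ⟨c', hc'⟩ : ∃ c' : ℝ, fconj g (pr2 p') = (c' : EReal) :=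
          ⟨(fconj g (pr2 p')).toReal, (EReal.coe_toReal hdom (fconj_ne_bot g (pr2 p'))).symm⟩
        have hlt : c' < c + e / 8 := by
          have hIio := hVsub ⟨hV', hdom⟩
          rw [Set.mem_preimage, hc', Set.mem_Iio] at hIio
          exact_mod_cast hIio
        have heta' : eta g (pr1 p') (pr2 p') = ((⟪pr1 p', pr2 p'⟫ - c' : ℝ) : EReal) := by
          rw [eta, hc', ← EReal.coe_sub]
        have hA'' : c + 3 * e / 4 < ⟪pr1 p', pr2 p'⟫ := hA'
        have hge : ((e / 2 : ℝ) : EReal) ≤ eta g (pr1 p') (pr2 p') := by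
          rw [heta']
          exact_mod_cast (by linarith : e / 2 ≤ ⟪pr1 p', pr2 p'⟫ - c')
        rw [Qeps, if_pos hge]
      · have htop' : fconj g (pr2 p') = ⊤ := by
          by_contra hne'; exact hdom hne'
        have heta' : eta g (pr1 p') (pr2 p') = ⊥ := by rw [eta, htop', EReal.sub_top]
        have hc1 : ¬ ((e / 2 : ℝ) : EReal) ≤ eta g (pr1 p') (pr2 p') := by
          rw [heta']
          exact fun hle => (EReal.coe_ne_bot _) (le_bot_iff.1 hle)
        have hc2 : ¬ (f (pr1 p') ≠ ⊤ ∧ 0 < eta g (pr1 p') (pr2 p')) := by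
          rintro ⟨-, h0⟩; rw [heta'] at h0; exact not_lt_bot h0
        rw [Qeps, if_neg hc1, Qpair, Qfun, if_neg hc2]
    have hsub : limSubdiff (Qeps f g h (e / 2)) p = limSubdiff (Qpair f g h) p :=
      limSubdiff_congr_of_eqOn hUo (fun u hu => (hkey u hu).symm) hpU
    have hK := hKLε (e / 2) (by linarith) p (by rw [hsub]; exact hne)
    exact KLAt_of_eqOn hUo hkey hpU hK

end Paper
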